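/- The boolean max-convolution, defined on distribution functions F, G : [0,∞) → [0,1] by (F ⊎∨ G)(t) = (1/F(t) + 1/G(t) − 1)^{-1} when F(t), G(t) > 0 and 0 otherwise, yields a valid distribution function of a probability measure on [0,∞), and this operation is commutative and associative. -/

import Mathlib

open MeasureTheory Set Filter Real
open scoped Topology ENNReal

/-- Boolean max-convolution on distribution-function values:
`(x, y) ↦ (1/x + 1/y - 1)⁻¹`, with value `0` when `x = 0` or `y = 0`. -/
noncomputable def boolMaxOp (x y : ℝ) : ℝ :=
  if x = 0 ∨ y = 0 then 0 else (1 / x + 1 / y - 1)⁻¹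

lemma boolMaxOp_eq {x y : ℝ} (hx : x ≠ 0) (hy : y ≠ 0) :
    boolMaxOp x y = (1 / x + 1 / y - 1)⁻¹ := by
  simp [boolMaxOp, hx, hy]

lemma boolMaxOp_zero_left (y : ℝ) : boolMaxOp 0 y = 0 := by simp [boolMaxOp]

lemma boolMaxOp_zero_right (x : ℝ) : boolMaxOp x 0 = 0 := by simp [boolMaxOp]

lemma one_le_r {x y : ℝ} (hx : 0 < x) (hx1 : x ≤ 1) (hy : 0 < y) (hy1 : y ≤ 1) :
    1 ≤ 1 / x + 1 / y - 1 := by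
  have h1 : 1 ≤ 1 / x := one_le_one_div hx hx1
  have h2 : 1 ≤ 1 / y := one_le_one_div hy hy1
  linarith

lemma boolMaxOp_pos {x y : ℝ} (hx : 0 < x) (hx1 : x ≤ 1) (hy : 0 < y) (hy1 : y ≤ 1) :
    0 < boolMaxOp x y := by
  rw [boolMaxOp_eq hx.ne' hy.ne']
  exact inv_pos.2 (lt_of_lt_of_le one_pos (one_le_r hx hx1 hy hy1))

lemma boolMaxOp_nonneg {x y : ℝ} (hx : 0 ≤ x) (hx1 : x ≤ 1) (hy : 0 ≤ y) (hy1 : y ≤ 1) :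
    0 ≤ boolMaxOp x y := by
  rcases eq_or_lt_of_le hx with h | h
  · simp [← h, boolMaxOp_zero_left]
  rcases eq_or_lt_of_le hy with h' | h'
  · simp [← h', boolMaxOp_zero_right]
  exact (boolMaxOp_pos h hx1 h' hy1).le

lemma boolMaxOp_le_left {x y : ℝ} (hx : 0 ≤ x) (hy : 0 ≤ y) (hy1 : y ≤ 1) :
    boolMaxOp x y ≤ x := by
  rcases eq_or_lt_of_le hx with h | h
  · simp [← h, boolMaxOp_zero_left]
  rcases eq_or_lt_of_le hy with h' | h'
  · simp [← h', boolMaxOp_zero_right, hx]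
  rw [boolMaxOp_eq h.ne' h'.ne']
  have h2 : 1 ≤ 1 / y := one_le_one_div h' hy1
  have hr : 1 / x ≤ 1 / x + 1 / y - 1 := by linarith
  calc (1 / x + 1 / y - 1)⁻¹ ≤ (1 / x)⁻¹ :=
        inv_anti₀ (by positivity) hr
    _ = x := by rw [one_div, inv_inv]

lemma boolMaxOp_le_right {x y : ℝ} (hx : 0 ≤ x) (hx1 : x ≤ 1) (hy : 0 ≤ y) :
    boolMaxOp x y ≤ y := by
  have : boolMaxOp x y = boolMaxOp y x := by
    simp only [boolMaxOp, or_comm]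
    congr 1
    ring
  rw [this]
  exact boolMaxOp_le_left hy hx hx1

lemma boolMaxOp_mono {x x' y y' : ℝ} (hx : 0 ≤ x) (hy : 0 ≤ y)
    (hx1' : x' ≤ 1) (hy1' : y' ≤ 1) (hxx : x ≤ x') (hyy : y ≤ y') :
    boolMaxOp x y ≤ boolMaxOp x' y' := by
  rcases eq_or_lt_of_le hx with h | h
  · rw [← h, boolMaxOp_zero_left]
    exact boolMaxOp_nonneg (hx.trans hxx) hx1' (hy.trans hyy) hy1'
  rcases eq_or_lt_of_le hy with h' | h'
  · rw [← h', boolMaxOp_zero_right]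
    exact boolMaxOp_nonneg (hx.trans hxx) hx1' (hy.trans hyy) hy1'
  have hx' : 0 < x' := h.trans_le hxx
  have hy' : 0 < y' := h'.trans_le hyy
  rw [boolMaxOp_eq h.ne' h'.ne', boolMaxOp_eq hx'.ne' hy'.ne']
  have h1 : 1 / x' ≤ 1 / x := one_div_le_one_div_of_le h hxx
  have h2 : 1 / y' ≤ 1 / y := one_div_le_one_div_of_le h' hyy
  exact inv_anti₀ (by have := one_le_r hx' hx1' hy' hy1'; linarith) (by linarith)

/-- The boolean max-convolution of two distribution functions of probability measures
on `[0,∞)` is again such a distribution function, and the operation is commutative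
and associative (on distribution-function values, which lie in `[0,1]`). -/
theorem boolMax_wellDefined_comm_assoc (μ ν : Measure ℝ)
    [IsProbabilityMeasure μ] [IsProbabilityMeasure ν]
    (hμ : μ (Set.Iio 0) = 0) (hν : ν (Set.Iio 0) = 0) :
    (∃ ρ : Measure ℝ, IsProbabilityMeasure ρ ∧ ρ (Set.Iio 0) = 0 ∧
      ∀ t : ℝ, 0 ≤ t →
        (ρ (Set.Iic t)).toReal =
          boolMaxOp ((μ (Set.Iic t)).toReal) ((ν (Set.Iic t)).toReal)) ∧
    (∀ x y : ℝ, boolMaxOp x y = boolMaxOp y x) ∧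
    (∀ x y z : ℝ, x ∈ Set.Icc (0:ℝ) 1 → y ∈ Set.Icc (0:ℝ) 1 → z ∈ Set.Icc (0:ℝ) 1 →
      boolMaxOp (boolMaxOp x y) z = boolMaxOp x (boolMaxOp y z)) := by
  refine ⟨?_, ?_, ?_⟩
  · -- existence of ρ
    set F := ProbabilityTheory.cdf μ with hF
    set G := ProbabilityTheory.cdf ν with hG
    have hF0 : ∀ t, 0 ≤ F t := ProbabilityTheory.cdf_nonneg μ
    have hG0 : ∀ t, 0 ≤ G t := ProbabilityTheory.cdf_nonneg ν
    have hF1 : ∀ t, F t ≤ 1 := ProbabilityTheory.cdf_le_one μ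
    have hG1 : ∀ t, G t ≤ 1 := ProbabilityTheory.cdf_le_one ν
    have hFneg : ∀ t : ℝ, t < 0 → F t = 0 := by
      intro t ht
      have : μ (Iic t) = 0 :=
        le_antisymm (le_trans (measure_mono (Iic_subset_Iio.2 ht)) hμ.le) zero_le
      rw [hF, ProbabilityTheory.cdf_eq_real, measureReal_def, this, ENNReal.toReal_zero]
    have hGneg : ∀ t : ℝ, t < 0 → G t = 0 := by
      intro t ht
      have : ν (Iic t) = 0 :=
        le_antisymm (le_trans (measure_mono (Iic_subset_Iio.2 ht)) hν.le) zero_le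
      rw [hG, ProbabilityTheory.cdf_eq_real, measureReal_def, this, ENNReal.toReal_zero]
    set h : ℝ → ℝ := fun t => boolMaxOp (F t) (G t) with hh
    have hmono : Monotone h := fun a b hab =>
      boolMaxOp_mono (hF0 a) (hG0 a) (hF1 b) (hG1 b) (F.mono hab) (G.mono hab)
    have hrc : ∀ x : ℝ, ContinuousWithinAt h (Ici x) x := by
      intro x
      rcases eq_or_lt_of_le (hF0 x) with hFx | hFx
      · -- F x = 0 : squeeze between 0 and F
        have hx0 : h x = 0 := by rw [hh]; simp [← hFx, boolMaxOp_zero_left]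
        rw [ContinuousWithinAt, hx0]
        have hFc : Tendsto (fun t => (F:ℝ→ℝ) t) (nhdsWithin x (Ici x)) (𝓝 0) := by
          have := F.right_continuous x
          rw [ContinuousWithinAt, ← hFx] at this
          exact this
        refine tendsto_of_tendsto_of_tendsto_of_le_of_le (tendsto_const_nhds) hFc ?_ ?_
        · intro t; exact boolMaxOp_nonneg (hF0 t) (hF1 t) (hG0 t) (hG1 t)
        · intro t; exact boolMaxOp_le_left (hF0 t) (hG0 t) (hG1 t)
      rcases eq_or_lt_of_le (hG0 x) with hGx | hGx
      · have hx0 : h x = 0 := by rw [hh]; simp [← hGx, boolMaxOp_zero_right]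
        rw [ContinuousWithinAt, hx0]
        have hGc : Tendsto (fun t => (G:ℝ→ℝ) t) (nhdsWithin x (Ici x)) (𝓝 0) := by
          have := G.right_continuous x
          rw [ContinuousWithinAt, ← hGx] at this
          exact this
        refine tendsto_of_tendsto_of_tendsto_of_le_of_le (tendsto_const_nhds) hGc ?_ ?_
        · intro t; exact boolMaxOp_nonneg (hF0 t) (hF1 t) (hG0 t) (hG1 t)
        · intro t; exact boolMaxOp_le_right (hF0 t) (hF1 t) (hG0 t)
      · -- both positive
        have hFc := F.right_continuous x
        have hGc := G.right_continuous x
        have hFc' : ContinuousWithinAt (fun t => 1 / F t) (Ici x) x :=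
          continuousWithinAt_const.div hFc hFx.ne'
        have hGc' : ContinuousWithinAt (fun t => 1 / G t) (Ici x) x :=
          continuousWithinAt_const.div hGc hGx.ne'
        have hr : ContinuousWithinAt (fun t => (1 / F t + 1 / G t - 1)⁻¹) (Ici x) x := by
          refine ((hFc'.add hGc').sub continuousWithinAt_const).inv₀ ?_
          have := one_le_r hFx (hF1 x) hGx (hG1 x)
          exact fun h0 => by change 1 / F x + 1 / G x - 1 = 0 at h0; rw [h0] at this; linarith
        refine hr.congr ?_ ?_
        · intro t ht
          have hFt : 0 < F t := hFx.trans_le (F.mono ht)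
          have hGt : 0 < G t := hGx.trans_le (G.mono ht)
          rw [hh]; exact boolMaxOp_eq hFt.ne' hGt.ne'
        · rw [hh]; exact boolMaxOp_eq hFx.ne' hGx.ne'
    set S : StieltjesFunction ℝ := ⟨h, hmono, hrc⟩ with hS
    have hbot : Tendsto S atBot (𝓝 0) := by
      refine Tendsto.congr' ?_ (tendsto_const_nhds (x := (0:ℝ)))
      filter_upwards [eventually_lt_atBot (0:ℝ)] with t ht
      show (0:ℝ) = h t
      rw [hh]; simp [hFneg t ht, boolMaxOp_zero_left]
    have htop : Tendsto S atTop (𝓝 1) := by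
      have hFt : Tendsto F atTop (𝓝 1) := ProbabilityTheory.tendsto_cdf_atTop μ
      have hGt : Tendsto G atTop (𝓝 1) := ProbabilityTheory.tendsto_cdf_atTop ν
      have hk : Tendsto (fun t => (1 / F t + 1 / G t - 1)⁻¹) atTop
          (𝓝 ((1 / 1 + 1 / 1 - 1)⁻¹)) := by
        refine Tendsto.inv₀ (((tendsto_const_nhds.div hFt one_ne_zero).add
          (tendsto_const_nhds.div hGt one_ne_zero)).sub tendsto_const_nhds) (by norm_num)
      have : ((1:ℝ) / 1 + 1 / 1 - 1)⁻¹ = 1 := by norm_num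
      rw [this] at hk
      refine Tendsto.congr' ?_ hk
      have h1 : ∀ᶠ t in atTop, (1:ℝ)/2 < F t := hFt.eventually_const_lt (by norm_num)
      have h2 : ∀ᶠ t in atTop, (1:ℝ)/2 < G t := hGt.eventually_const_lt (by norm_num)
      filter_upwards [h1, h2] with t ht1 ht2
      exact (boolMaxOp_eq (by linarith) (by linarith)).symm
    haveI hprob : IsProbabilityMeasure S.measure := S.isProbabilityMeasure hbot htop
    refine ⟨S.measure, hprob, ?_, ?_⟩
    · have hIci : S.measure (Ici 0) = 1 := by
        rw [S.measure_Ici htop 0]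
        have hll : Function.leftLim h 0 = 0 := by
          refine leftLim_eq_of_tendsto ?_
          refine Tendsto.congr' ?_ (tendsto_const_nhds (x := (0:ℝ)))
          filter_upwards [self_mem_nhdsWithin] with t ht
          show (0:ℝ) = h t
          rw [hh]; simp [hFneg t ht, boolMaxOp_zero_left]
        show ENNReal.ofReal (1 - Function.leftLim h 0) = 1
        rw [hll]; norm_num
      have := measure_compl (μ := S.measure) (s := Ici (0:ℝ)) measurableSet_Ici (measure_ne_top _ _)
      rw [compl_Ici, hIci, measure_univ] at this
      simpa using this
    · intro t _
      rw [S.measure_Iic hbot t]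
      show (ENNReal.ofReal (h t - 0)).toReal = _
      rw [sub_zero, ENNReal.toReal_ofReal
        (boolMaxOp_nonneg (hF0 t) (hF1 t) (hG0 t) (hG1 t))]
      show boolMaxOp ((F:ℝ→ℝ) t) ((G:ℝ→ℝ) t) = _
      congr 1 <;> [exact ProbabilityTheory.cdf_eq_real μ t;
        exact ProbabilityTheory.cdf_eq_real ν t]
  · -- commutativity
    intro x y
    simp only [boolMaxOp, or_comm]
    congr 1
    ring
  · -- associativity
    rintro x y z ⟨hx0, hx1⟩ ⟨hy0, hy1⟩ ⟨hz0, hz1⟩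
    rcases eq_or_lt_of_le hx0 with h | hx
    · rw [← h, boolMaxOp_zero_left, boolMaxOp_zero_left, boolMaxOp_zero_left]
    rcases eq_or_lt_of_le hy0 with h | hy
    · rw [← h]; simp [boolMaxOp_zero_right, boolMaxOp_zero_left]
    rcases eq_or_lt_of_le hz0 with h | hz
    · rw [← h, boolMaxOp_zero_right, boolMaxOp_zero_right, boolMaxOp_zero_right]
    have hxy := boolMaxOp_pos hx hx1 hy hy1
    have hyz := boolMaxOp_pos hy hy1 hz hz1
    rw [boolMaxOp_eq hxy.ne' hz.ne', boolMaxOp_eq hx.ne' hyz.ne',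
      boolMaxOp_eq hx.ne' hy.ne', boolMaxOp_eq hy.ne' hz.ne']
    simp only [one_div, inv_inv]
    ring_nf
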